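/- Let Q_n be the hypercube graph and 0 ≤ S < n. Define for each vertex i the uniform probability measure ξ_i on the ball B(i,S), i.e., ξ_i = χ_{B(i,S)}/|B(i,S)|. Then for every edge ij of Q_n, ‖ξ_i − ξ_j‖_1 = 2·binom(n-1,S)/(∑_{k=0}^S binom(n,k)). -/

import Mathlib

open Finset

-- card of a subset-sphere: x with x agreeing with v outside allowed set? general sphere lemma
lemma sphere_card_gen {n : ℕ} (v : Fin n → Bool) (t : Finset (Fin n)) (k : ℕ) :
    ((univ : Finset (Fin n → Bool)).filter
        fun x => ({q | v q ≠ x q} : Finset (Fin n)) ∈ t.powersetCard k).card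
      = t.card.choose k := by
  rw [← Finset.card_powersetCard]
  apply Finset.card_nbij' (fun x => ({q | v q ≠ x q} : Finset (Fin n)))
      (fun s q => if q ∈ s then !(v q) else v q)
  · intro x hx
    simpa using (Finset.mem_filter.mp hx).2
  · intro s hs
    rw [Finset.mem_coe] at hs ⊢
    simp only [Finset.mem_filter, Finset.mem_univ, true_and]
    convert hs using 2
    ext q
    simp only [Finset.mem_filter, Finset.mem_univ, true_and]
    by_cases h : q ∈ s <;> simp [h]
  · intro x hx
    funext q
    by_cases h : v q = x q <;> by_cases hq : q ∈ ({q | v q ≠ x q} : Finset (Fin n)) <;>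
      simp_all <;> cases hvq : v q <;> cases hxq : x q <;> simp_all
  · intro s hs
    ext q
    simp only [Finset.mem_filter, Finset.mem_univ, true_and]
    by_cases h : q ∈ s <;> simp [h]

lemma dist_as_card {n : ℕ} (v x : Fin n → Bool) :
    hammingDist v x = ({q | v q ≠ x q} : Finset (Fin n)).card := rfl

lemma ball_card {n : ℕ} (v : Fin n → Bool) (S : ℕ) :
    ((univ : Finset (Fin n → Bool)).filter fun y => hammingDist v y ≤ S).card
      = ∑ k ∈ Finset.range (S+1), n.choose k := by
  have : ((univ : Finset (Fin n → Bool)).filter fun y => hammingDist v y ≤ S)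
      = (Finset.range (S+1)).biUnion
        (fun k => (univ : Finset (Fin n → Bool)).filter fun y => hammingDist v y = k) := by
    ext y
    simp [Nat.lt_succ_iff]
  rw [this, Finset.card_biUnion]
  · apply Finset.sum_congr rfl
    intro k _
    have := sphere_card_gen v (univ : Finset (Fin n)) k
    simp only [Finset.mem_powersetCard, Finset.card_univ, Fintype.card_fin] at this
    rw [← this]
    congr 1
    ext x
    simp [dist_as_card]
  · intro a _ b _ hab
    simp only [Finset.disjoint_left, Finset.mem_filter]
    rintro x ⟨-, h1⟩ ⟨-, h2⟩
    omega

lemma only_card {n S : ℕ} (hS : S < n) (p : Fin n) (v : Fin n → Bool) :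
    ((univ : Finset (Fin n → Bool)).filter
        fun x => hammingDist v x = S ∧ x p = v p).card = (n-1).choose S := by
  have hc : (univ.erase p : Finset (Fin n)).card = n - 1 := by
    rw [Finset.card_erase_of_mem (Finset.mem_univ p)]
    simp
  have := sphere_card_gen v (univ.erase p) S
  rw [hc] at this
  rw [← this]
  congr 1
  ext x
  rw [Finset.mem_filter, Finset.mem_filter, Finset.mem_powersetCard, dist_as_card]
  constructor
  · rintro ⟨hu, hcard, hxp⟩
    refine ⟨hu, ?_, hcard⟩
    intro q hq
    have hne : v q ≠ x q := (Finset.mem_filter.mp hq).2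
    refine Finset.mem_erase.mpr ⟨?_, Finset.mem_univ q⟩
    rintro rfl
    exact hne hxp.symm
  · rintro ⟨hu, hsub, hcard⟩
    refine ⟨hu, hcard, ?_⟩
    by_contra h
    have hp : p ∈ ({q | v q ≠ x q} : Finset (Fin n)) :=
      Finset.mem_filter.mpr ⟨Finset.mem_univ p, fun h' => h h'.symm⟩
    exact (Finset.mem_erase.mp (hsub hp)).1 rfl

lemma dist_succ {n : ℕ} {v w x : Fin n → Bool} {p : Fin n}
    (hp : v p ≠ w p) (hq : ∀ q, q ≠ p → v q = w q) (hx : x p = v p) :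
    hammingDist w x = hammingDist v x + 1 := by
  have hset : ({q | w q ≠ x q} : Finset (Fin n)) = insert p ({q | v q ≠ x q} : Finset (Fin n)) := by
    ext q
    by_cases h : q = p
    · subst h
      simp only [Finset.mem_filter, Finset.mem_univ, true_and, Finset.mem_insert, true_or,
        iff_true]
      rw [hx]; exact fun h' => hp h'.symm
    · simp only [Finset.mem_filter, Finset.mem_univ, true_and, Finset.mem_insert, h, false_or]
      rw [hq q h]
  have hpn : p ∉ ({q | v q ≠ x q} : Finset (Fin n)) := by simp [hx]
  rw [dist_as_card, dist_as_card, hset, Finset.card_insert_of_notMem hpn]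

lemma only_eq {n S : ℕ} {v w : Fin n → Bool} {p : Fin n}
    (hp : v p ≠ w p) (hq : ∀ q, q ≠ p → v q = w q) :
    ((univ : Finset (Fin n → Bool)).filter
        fun x => hammingDist v x ≤ S ∧ ¬ hammingDist w x ≤ S)
      = (univ.filter fun x => hammingDist v x = S ∧ x p = v p) := by
  ext x
  simp only [Finset.mem_filter, Finset.mem_univ, true_and]
  constructor
  · rintro ⟨h1, h2⟩
    by_cases hx : x p = v p
    · have hd := dist_succ hp hq hx
      exact ⟨by omega, hx⟩
    · exfalso
      have hxw : x p = w p := by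
        cases hxp : x p <;> cases hvp : v p <;> cases hwp : w p <;> simp_all
      have hd := dist_succ (Ne.symm hp) (fun q hq' => (hq q hq').symm) hxw
      omega
  · rintro ⟨hd, hx⟩
    have h := dist_succ hp hq hx
    omega

theorem stmt4 (n S : ℕ) (hS : S < n) (i j : Fin n → Bool)
    (hadj : hammingDist i j = 1)
    (ξ : (Fin n → Bool) → (Fin n → Bool) → ℝ)
    (hξ : ∀ v x, ξ v x = if hammingDist v x ≤ S then
        (1 : ℝ) / ((Finset.univ.filter fun y => hammingDist v y ≤ S).card : ℝ) else 0) :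
    ∑ x : Fin n → Bool, |ξ i x - ξ j x|
      = 2 * ((n - 1).choose S : ℝ) / ∑ k ∈ Finset.range (S + 1), (n.choose k : ℝ) := by
  classical
  rw [dist_as_card] at hadj
  obtain ⟨p, hp⟩ := Finset.card_eq_one.mp hadj
  have hpm : p ∈ ({q | i q ≠ j q} : Finset (Fin n)) := by
    rw [hp]; exact Finset.mem_singleton_self p
  have hip : i p ≠ j p := (Finset.mem_filter.mp hpm).2
  have hij : ∀ q, q ≠ p → i q = j q := by
    intro q hq
    by_contra h
    have hm : q ∈ ({r | i r ≠ j r} : Finset (Fin n)) :=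
      Finset.mem_filter.mpr ⟨Finset.mem_univ q, h⟩
    rw [hp, Finset.mem_singleton] at hm
    exact hq hm
  set B : ℕ := ∑ k ∈ Finset.range (S+1), n.choose k with hB
  have hB0 : 0 < B := by
    have h1 : 0 < n.choose 0 := by simp
    have h2 : n.choose 0 ≤ B :=
      Finset.single_le_sum (f := fun k => n.choose k) (fun k _ => Nat.zero_le _)
        (Finset.mem_range.mpr (Nat.succ_pos S))
    omega
  have hc0 : (0:ℝ) ≤ 1 / (B : ℝ) := by positivity
  have key : ∀ x : Fin n → Bool, |ξ i x - ξ j x| =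
      (if hammingDist i x ≤ S ∧ ¬ hammingDist j x ≤ S then 1 / (B:ℝ) else 0)
      + (if hammingDist j x ≤ S ∧ ¬ hammingDist i x ≤ S then 1 / (B:ℝ) else 0) := by
    intro x
    rw [hξ i x, hξ j x, ball_card, ball_card, ← hB]
    by_cases h1 : hammingDist i x ≤ S <;> by_cases h2 : hammingDist j x ≤ S <;>
      simp [h1, h2, abs_of_nonneg hc0]
  rw [Finset.sum_congr rfl (fun x _ => key x), Finset.sum_add_distrib,
    ← Finset.sum_filter, ← Finset.sum_filter, only_eq hip hij,
    only_eq (Ne.symm hip) (fun q hq => (hij q hq).symm),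
    Finset.sum_const, Finset.sum_const, only_card hS p i, only_card hS p j]
  have hcast : ((B:ℕ):ℝ) = ∑ k ∈ Finset.range (S+1), (n.choose k : ℝ) := by
    rw [hB]; push_cast; ring
  rw [← hcast]
  simp only [nsmul_eq_mul]
  have hBne : (B:ℝ) ≠ 0 := Nat.cast_ne_zero.mpr hB0.ne'
  field_simp
  ring
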